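/- Let A and B be bounded operators on a complex Hilbert space such that A is normal, AB is paranormal, and A*AB = BA*A. Then BA is paranormal. -/

import Mathlib

open ContinuousLinearMap
open scoped InnerProductSpace

lemma arith_aux (a b c D n m α β ε K₀ δ : ℝ)
    (ha : 0 ≤ a) (hb : 0 ≤ b) (hc0 : 0 ≤ c) (hD : 0 ≤ D) (hn : 0 ≤ n) (hm0 : 0 ≤ m)
    (hα : 0 ≤ α) (hβ : 0 ≤ β)
    (hε0 : 0 < ε) (hε1 : ε ≤ 1) (hε2 : ε ≤ δ / (K₀ + 1)) (hδ : 0 < δ)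
    (hK : K₀ = 3 * α * β ^ 2 * n ^ 2 + β ^ 2 * n ^ 2)
    (hmn : m ≤ n)
    (hc1 : a ≤ b + β * (ε * n))
    (hd1 : D ≤ c + β * (α * (β * (ε * n))))
    (hbb : b ≤ α * (β * n))
    (he : b ^ 2 ≤ D * m) :
    a ^ 2 ≤ c * n + δ := by
  have hK0 : 0 ≤ K₀ := by rw [hK]; positivity
  have hDn : b ^ 2 ≤ D * n := le_trans he (mul_le_mul_of_nonneg_left hmn hD)
  have hbsq : b ^ 2 ≤ c * n + α * β ^ 2 * ε * n ^ 2 := by nlinarith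
  have key : a ^ 2 ≤ c * n + ε * K₀ := by
    have hsq : a ^ 2 ≤ (b + β * (ε * n)) ^ 2 := by nlinarith
    have h2 : b * (β * (ε * n)) ≤ (α * (β * n)) * (β * (ε * n)) := by
      apply mul_le_mul_of_nonneg_right hbb; positivity
    have h3 : (β * (ε * n)) ^ 2 ≤ β ^ 2 * ε * n ^ 2 := by nlinarith
    nlinarith
  have hεK : ε * K₀ ≤ δ := by
    have h1 : ε * K₀ ≤ (δ / (K₀ + 1)) * K₀ := mul_le_mul_of_nonneg_right hε2 hK0
    have h2 : (δ / (K₀ + 1)) * K₀ ≤ δ := by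
      rw [div_mul_eq_mul_div, div_le_iff₀ (by positivity)]
      nlinarith
    linarith
  linarith


open Polynomial in
lemma commute_cfc_of_commute' {A : Type*} [CStarAlgebra A]
    (a b : A) (ha : IsSelfAdjoint a) (f : ℝ → ℝ) (hb : Commute b a) :
    Commute b (cfc f a) := by
  by_cases hf : ContinuousOn f (spectrum ℝ a)
  · rw [cfc_apply f a ha hf]
    set σ := spectrum ℝ a
    have key : ∀ g : C(σ, ℝ), Commute b (cfcHom ha g) := by
      have hclosed : IsClosed {g : C(σ, ℝ) | Commute b (cfcHom ha g)} := by
        have h1 : Continuous fun g : C(σ, ℝ) => b * cfcHom ha g :=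
          continuous_const.mul (cfcHom_continuous ha)
        have h2 : Continuous fun g : C(σ, ℝ) => cfcHom ha g * b :=
          (cfcHom_continuous ha).mul continuous_const
        exact isClosed_eq h1 h2
      have haev : ∀ p : ℝ[X], Commute b (aeval a p) := by
        intro p
        induction p using Polynomial.induction_on with
        | C c => simpa using (show Commute b (algebraMap ℝ A c) from (Algebra.commutes c b).symm)
        | add p q hp hq => simpa [map_add] using hp.add_right hq
        | monomial n c hc =>
            rw [pow_succ, ← mul_assoc, map_mul, aeval_X]
            exact hc.mul_right hb
      have hmap : ∀ q : ℝ[X],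
          cfcHom ha (Polynomial.toContinuousMapOnAlgHom σ q) = aeval a q := by
        intro q
        have h := cfc_polynomial q a ha
        rw [cfc_apply _ a ha (by fun_prop)] at h
        rw [← h]
        congr 1
      have hsub : (polynomialFunctions σ : Set C(σ, ℝ)) ⊆
          {g : C(σ, ℝ) | Commute b (cfcHom ha g)} := by
        rintro g hg
        obtain ⟨p, -, rfl⟩ := Subalgebra.mem_map.mp hg
        simpa only [Set.mem_setOf_eq, hmap] using haev p
      intro g
      have hg : g ∈ closure (polynomialFunctions σ : Set C(σ, ℝ)) := by
        rw [← Subalgebra.topologicalClosure_coe,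
          polynomialFunctions.topologicalClosure σ]
        trivial
      exact closure_minimal hsub hclosed hg
    exact key _
  · rw [cfc_apply_of_not_continuousOn a hf]
    exact Commute.zero_right b

variable {H : Type*} [NormedAddCommGroup H] [InnerProductSpace ℂ H] [CompleteSpace H]

/-- A normal, AB paranormal, A*AB = BA*A ⟹ BA paranormal. -/
theorem stmt10 (A B : H →L[ℂ] H)
    (hA : adjoint A * A = A * adjoint A)
    (hAB : ∀ x : H, ‖(A * B) x‖ ^ 2 ≤ ‖((A * B) ^ 2) x‖ * ‖x‖)
    (hcomm : adjoint A * A * B = B * (adjoint A * A)) :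
    ∀ x : H, ‖(B * A) x‖ ^ 2 ≤ ‖((B * A) ^ 2) x‖ * ‖x‖ := by
  intro x
  obtain ⟨P, hPdef⟩ : ∃ P : H →L[ℂ] H, P = adjoint A * A := ⟨_, rfl⟩
  have hPsa : IsSelfAdjoint P := by
    rw [hPdef, IsSelfAdjoint, star_mul, ContinuousLinearMap.star_eq_adjoint,
      ContinuousLinearMap.star_eq_adjoint, adjoint_adjoint]
  have hPpos : (0 : H →L[ℂ] H) ≤ P := by
    rw [hPdef]
    simpa [ContinuousLinearMap.star_eq_adjoint] using star_mul_self_nonneg A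
  have hspec : ∀ t ∈ spectrum ℝ P, (0:ℝ) ≤ t := spectrum_nonneg_of_nonneg hPpos
  have hAP : Commute A P := by
    show A * P = P * A
    rw [hPdef, ← mul_assoc, ← hA]
  have hBP : Commute B P := by rw [hPdef]; exact hcomm.symm
  obtain ⟨S, hSdef⟩ : ∃ S : H →L[ℂ] H, S = cfc Real.sqrt P := ⟨_, rfl⟩
  have hSsa : IsSelfAdjoint S := hSdef ▸ cfc_predicate _ _
  have hS2 : S * S = P := by
    rw [hSdef, ← cfc_mul _ _ _ Real.continuous_sqrt.continuousOn Real.continuous_sqrt.continuousOn]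
    have : cfc (fun t => Real.sqrt t * Real.sqrt t) P = cfc (id : ℝ → ℝ) P :=
      cfc_congr (fun t ht => Real.mul_self_sqrt (hspec t ht))
    rw [this, cfc_id ℝ P]
  have hAS : Commute A S := hSdef ▸ commute_cfc_of_commute' P A hPsa _ hAP
  have hBS : Commute B S := hSdef ▸ commute_cfc_of_commute' P B hPsa _ hBP
  have normAS : ∀ z : H, ‖A z‖ = ‖S z‖ := by
    intro z
    have h1 : ⟪A z, A z⟫_ℂ = ⟪P z, z⟫_ℂ := by
      rw [hPdef, ContinuousLinearMap.mul_apply, ContinuousLinearMap.adjoint_inner_left]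
    have h2 : ⟪S z, S z⟫_ℂ = ⟪(S * S) z, z⟫_ℂ := by
      rw [ContinuousLinearMap.mul_apply]
      calc ⟪S z, S z⟫_ℂ = ⟪S z, adjoint S z⟫_ℂ := by rw [hSsa.adjoint_eq]
        _ = ⟪S (S z), z⟫_ℂ := ContinuousLinearMap.adjoint_inner_right S (S z) z
    have h3 : ⟪A z, A z⟫_ℂ = ⟪S z, S z⟫_ℂ := by rw [h1, h2, hS2]
    have h5 : ‖A z‖ ^ 2 = ‖S z‖ ^ 2 := by
      rw [inner_self_eq_norm_sq_to_K, inner_self_eq_norm_sq_to_K] at h3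
      exact_mod_cast h3
    nlinarith [norm_nonneg (A z), norm_nonneg (S z)]
  -- the approximation argument
  have main : ∀ δ : ℝ, 0 < δ →
      ‖(B * A) x‖ ^ 2 ≤ ‖((B * A) ^ 2) x‖ * ‖x‖ + δ := by
    intro δ hδ
    obtain ⟨K₀, hK₀⟩ : ∃ K₀ : ℝ, K₀ = 3 * ‖A‖ * ‖B‖ ^ 2 * ‖x‖ ^ 2 + ‖B‖ ^ 2 * ‖x‖ ^ 2 := ⟨_, rfl⟩
    have hK₀0 : 0 ≤ K₀ := by rw [hK₀]; positivity
    obtain ⟨ε, hε⟩ : ∃ ε : ℝ, ε = min 1 (δ / (K₀ + 1)) := ⟨_, rfl⟩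
    have hd1 : 0 < δ / (K₀ + 1) := by positivity
    have hε0 : 0 < ε := hε ▸ lt_min one_pos hd1
    have hε1 : ε ≤ 1 := hε ▸ min_le_left _ _
    have hε2 : ε ≤ δ / (K₀ + 1) := hε ▸ min_le_right _ _
    have hrc : Continuous fun t : ℝ => (Real.sqrt t + ε)⁻¹ :=
      (Real.continuous_sqrt.add continuous_const).inv₀ (fun t => (add_pos_of_nonneg_of_pos (Real.sqrt_nonneg t) hε0).ne')
    obtain ⟨R, hRdef⟩ : ∃ R : H →L[ℂ] H, R = cfc (fun t : ℝ => (Real.sqrt t + ε)⁻¹) P := ⟨_, rfl⟩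
    have hAR : Commute A R := hRdef ▸ commute_cfc_of_commute' P A hPsa _ hAP
    have hBR : Commute B R := hRdef ▸ commute_cfc_of_commute' P B hPsa _ hBP
    have hSRmul : S * R = cfc (fun t : ℝ => Real.sqrt t * (Real.sqrt t + ε)⁻¹) P := by
      rw [hSdef, hRdef, ← cfc_mul _ _ _ Real.continuous_sqrt.continuousOn hrc.continuousOn]
    have hSR : S * R = 1 - ε • R := by
      rw [hSRmul]
      clear hSRmul
      have h1 : cfc (fun t : ℝ => Real.sqrt t * (Real.sqrt t + ε)⁻¹) P
          = cfc (fun t : ℝ => 1 - ε * (Real.sqrt t + ε)⁻¹) P := by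
        refine cfc_congr fun t ht => ?_
        have h0 : Real.sqrt t + ε ≠ 0 := by positivity
        field_simp
        ring
      rw [h1, cfc_sub (fun _ => (1:ℝ)) (fun t : ℝ => ε * (Real.sqrt t + ε)⁻¹) P (by fun_prop) ((continuous_const.mul hrc).continuousOn)]
      rw [cfc_const_mul ε _ _ hrc.continuousOn, cfc_const (1:ℝ) P, map_one, ← hRdef]
    have hSRnorm : ‖S * R‖ ≤ 1 := by
      rw [hSRmul]
      refine norm_cfc_le zero_le_one fun t ht => ?_
      have h1 : 0 ≤ Real.sqrt t := Real.sqrt_nonneg t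
      rw [Real.norm_eq_abs, abs_of_nonneg (by positivity), ← div_eq_mul_inv]
      rw [div_le_one (by positivity)]
      linarith
    obtain ⟨w, hwdef⟩ : ∃ w : H, w = R (A x) := ⟨_, rfl⟩
    have hwa : w = A (R x) := by
      rw [hwdef, ← ContinuousLinearMap.mul_apply, ← hAR, ContinuousLinearMap.mul_apply]
    have hwn : ‖w‖ ≤ ‖x‖ := by
      rw [hwa, normAS, ← ContinuousLinearMap.mul_apply]
      calc ‖(S * R) x‖ ≤ ‖S * R‖ * ‖x‖ := (S * R).le_opNorm x
        _ ≤ 1 * ‖x‖ := by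
            exact mul_le_mul_of_nonneg_right hSRnorm (norm_nonneg x)
        _ = ‖x‖ := one_mul _
    have hSw : S w - A x = -(ε • w) := by
      have h7 : S w = (S * R) (A x) := by rw [hwdef, ContinuousLinearMap.mul_apply]
      rw [h7, hSR, hwdef]
      simp [ContinuousLinearMap.sub_apply, ContinuousLinearMap.smul_apply]
    have hSwn : ‖S w - A x‖ ≤ ε * ‖x‖ := by
      rw [hSw, norm_neg, norm_smul, Real.norm_eq_abs, abs_of_pos hε0]
      exact mul_le_mul_of_nonneg_left hwn hε0.le
    -- (c)
    have e1 : ‖(A * B) w‖ = ‖B (S w)‖ := by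
      have h1 : (A * B) w = A (B w) := rfl
      have h2 : S (B w) = B (S w) := by
        rw [← ContinuousLinearMap.mul_apply, ← hBS, ContinuousLinearMap.mul_apply]
      rw [h1, normAS, h2]
    have hc : ‖(B * A) x‖ ≤ ‖(A * B) w‖ + ‖B‖ * (ε * ‖x‖) := by
      have e2 : (B * A) x = B (S w) - B (S w - A x) := by
        rw [map_sub]
        simp [ContinuousLinearMap.mul_apply]
      calc ‖(B * A) x‖ ≤ ‖B (S w)‖ + ‖B (S w - A x)‖ := by
            rw [e2]; exact norm_sub_le _ _
        _ ≤ ‖(A * B) w‖ + ‖B‖ * (ε * ‖x‖) := by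
            rw [e1]
            gcongr
            calc ‖B (S w - A x)‖ ≤ ‖B‖ * ‖S w - A x‖ := B.le_opNorm _
              _ ≤ ‖B‖ * (ε * ‖x‖) := mul_le_mul_of_nonneg_left hSwn (norm_nonneg B)
    -- (d)
    have hop : S * B * A * B = B * A * B * S := by
      have h1 : S * B = B * S := hBS.symm.eq
      have h2 : S * A = A * S := hAS.symm.eq
      calc S * B * A * B = B * S * A * B := by rw [h1]
        _ = B * A * S * B := by rw [mul_assoc B, h2, ← mul_assoc]
        _ = B * A * B * S := by rw [mul_assoc (B * A), h1, ← mul_assoc]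
    have hd : ‖((A * B) ^ 2) w‖ ≤ ‖((B * A) ^ 2) x‖ + ‖B‖ * (‖A‖ * (‖B‖ * (ε * ‖x‖))) := by
      have e3 : ((A * B) ^ 2) w = A (B (A (B w))) := by
        simp [pow_two, ContinuousLinearMap.mul_apply]
      have e4 : ((B * A) ^ 2) x = B (A (B (A x))) := by
        simp [pow_two, ContinuousLinearMap.mul_apply]
      have e5 : S (B (A (B w))) = B (A (B (S w))) := by
        have := ContinuousLinearMap.ext_iff.mp hop w
        simpa [ContinuousLinearMap.mul_apply] using this
      have e6 : B (A (B (S w))) = ((B * A) ^ 2) x + B (A (B (S w - A x))) := by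
        rw [e4, map_sub, map_sub, map_sub]
        abel
      calc ‖((A * B) ^ 2) w‖ = ‖B (A (B (S w)))‖ := by rw [e3, normAS, e5]
        _ ≤ ‖((B * A) ^ 2) x‖ + ‖B (A (B (S w - A x)))‖ := by
            rw [e6]; exact norm_add_le _ _
        _ ≤ ‖((B * A) ^ 2) x‖ + ‖B‖ * (‖A‖ * (‖B‖ * (ε * ‖x‖))) := by
            gcongr
            calc ‖B (A (B (S w - A x)))‖ ≤ ‖B‖ * ‖A (B (S w - A x))‖ := B.le_opNorm _
              _ ≤ ‖B‖ * (‖A‖ * ‖B (S w - A x)‖) := by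
                  gcongr; exact A.le_opNorm _
              _ ≤ ‖B‖ * (‖A‖ * (‖B‖ * ‖S w - A x‖)) := by
                  gcongr; exact B.le_opNorm _
              _ ≤ ‖B‖ * (‖A‖ * (‖B‖ * (ε * ‖x‖))) := by gcongr
    -- (b bound)
    have hbb : ‖(A * B) w‖ ≤ ‖A‖ * (‖B‖ * ‖x‖) := by
      calc ‖(A * B) w‖ = ‖A (B w)‖ := rfl
        _ ≤ ‖A‖ * ‖B w‖ := A.le_opNorm _
        _ ≤ ‖A‖ * (‖B‖ * ‖w‖) := by gcongr; exact B.le_opNorm _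
        _ ≤ ‖A‖ * (‖B‖ * ‖x‖) := by gcongr
    have he := hAB w
    exact arith_aux (‖(B * A) x‖) (‖(A * B) w‖) (‖((B * A) ^ 2) x‖)
      (‖((A * B) ^ 2) w‖) (‖x‖) (‖w‖) ‖A‖ ‖B‖ ε K₀ δ
      (norm_nonneg _) (norm_nonneg _) (norm_nonneg _) (norm_nonneg _) (norm_nonneg _)
      (norm_nonneg _) (norm_nonneg _) (norm_nonneg _) hε0 hε1 hε2 hδ hK₀ hwn hc hd hbb he
  have := le_of_forall_pos_le_add main
  linarith
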